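/- (Rayleigh and double-Rayleigh PDF) Let γ̄ > 0, 0 < α < 1 and γ > 0. Then ∫₀^∞ (1/((1 - α(1 - x)) γ̄)) e^{-γ/((1 - α(1 - x)) γ̄)} e^{-x} dx = (1/(α γ̄)) e^{(1-α)/α} Γ(0, (1-α)/α, γ/(α γ̄)). -/

import Mathlib

open MeasureTheory Real

/-- Generalized incomplete gamma function `Γ(a, x, b) = ∫ₓ^∞ t^{a-1} e^{-t} e^{-b/t} dt`. -/
noncomputable def genGamma (a x b : ℝ) : ℝ :=
  ∫ t in Set.Ioi x, t ^ (a - 1) * Real.exp (-t) * Real.exp (-b / t)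

lemma shift_Ioi (c : ℝ) (g : ℝ → ℝ) :
    ∫ x in Set.Ioi (0:ℝ), g (x + c) = ∫ t in Set.Ioi c, g t := by
  have h := (measurePreserving_add_right volume c).setIntegral_preimage_emb
    (measurableEmbedding_addRight c) g (Set.Ioi c)
  rw [← h]
  congr 1
  ext x
  simp [Set.mem_Ioi]

/-- **Rayleigh and double-Rayleigh (RDR) PDF.** For `γ̄ > 0`, `0 < α < 1` and `γ > 0`,
`∫₀^∞ (1/((1-α(1-x))γ̄)) e^{-γ/((1-α(1-x))γ̄)} e^{-x} dx
  = (1/(αγ̄)) e^{(1-α)/α} Γ(0, (1-α)/α, γ/(αγ̄))`. -/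
theorem rdr_pdf (γbar α γ : ℝ) (hγbar : 0 < γbar) (hα0 : 0 < α) (hα1 : α < 1)
    (hγ : 0 < γ) :
    ∫ x in Set.Ioi (0 : ℝ),
        (1 / ((1 - α * (1 - x)) * γbar)) *
          Real.exp (-γ / ((1 - α * (1 - x)) * γbar)) * Real.exp (-x)
      = (1 / (α * γbar)) * Real.exp ((1 - α) / α) *
          genGamma 0 ((1 - α) / α) (γ / (α * γbar)) := by
  set c : ℝ := (1 - α) / α with hc
  set b : ℝ := γ / (α * γbar) with hb
  have hc0 : 0 < c := div_pos (by linarith) hα0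
  set g : ℝ → ℝ := fun t =>
    (1 / (α * γbar)) * Real.exp c * (t ^ ((0:ℝ) - 1) * Real.exp (-t) * Real.exp (-b / t))
    with hg
  have key : ∀ x ∈ Set.Ioi (0:ℝ),
      (1 / ((1 - α * (1 - x)) * γbar)) *
          Real.exp (-γ / ((1 - α * (1 - x)) * γbar)) * Real.exp (-x) = g (x + c) := by
    intro x hx
    rw [Set.mem_Ioi] at hx
    have hxc : 0 < x + c := by linarith
    have hu : α * (x + c) = 1 - α * (1 - x) := by
      field_simp [hc]
      have hac : α * c = 1 - α := by rw [hc]; field_simp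
      linarith
    have hu0 : 0 < 1 - α * (1 - x) := by
      rw [← hu]; positivity
    have hrpow : (x + c) ^ ((0:ℝ) - 1) = (x + c)⁻¹ := by
      rw [zero_sub, Real.rpow_neg_one]
    rw [hg]
    simp only [hrpow]
    have h1 : (1 / ((1 - α * (1 - x)) * γbar)) = (1 / (α * γbar)) * (x + c)⁻¹ := by
      rw [← hu]
      field_simp
    have h2 : (-γ / ((1 - α * (1 - x)) * γbar)) = -b / (x + c) := by
      rw [← hu, hb]
      field_simp
    have h3 : Real.exp (-x) = Real.exp c * Real.exp (-(x + c)) := by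
      rw [← Real.exp_add]; ring_nf
    rw [h1, h2, h3]
    ring
  rw [setIntegral_congr_fun measurableSet_Ioi key, shift_Ioi c g, hg, genGamma,
    integral_const_mul]
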